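/- Let X be a nonsingular Beltrami field on a Riemannian 3-manifold (M,g,μ) with ∇×X = fX for a smooth positive function f, where ι_{∇×X}μ = d(ι_X g). Then the 1-form α = ι_X g is a contact form: α ∧ dα = f · ‖X‖² · (nonzero multiple of μ) is nowhere vanishing. -/

import Mathlib

open Real

/-- Partial derivative in the `i`-th coordinate direction on `ℝ³`. -/
noncomputable def pd (i : Fin 3) (f : (Fin 3 → ℝ) → ℝ) (p : Fin 3 → ℝ) : ℝ :=
  fderiv ℝ f p (Pi.single i 1)

/-- The curl of a (co)vector field `α` on `ℝ³`: the vector proxy of the exterior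
derivative `dα` of the 1-form with components `α`. -/
noncomputable def curlV (α : (Fin 3 → ℝ) → Fin 3 → ℝ) (p : Fin 3 → ℝ) : Fin 3 → ℝ :=
  ![pd 1 (fun q => α q 2) p - pd 2 (fun q => α q 1) p,
    pd 2 (fun q => α q 0) p - pd 0 (fun q => α q 2) p,
    pd 0 (fun q => α q 1) p - pd 1 (fun q => α q 0) p]

/-- Euclidean dot product on `ℝ³`. -/
def dot3 (u v : Fin 3 → ℝ) : ℝ := ∑ i, u i * v i

/-- Cross product on `ℝ³`. -/
def cross3 (u v : Fin 3 → ℝ) : Fin 3 → ℝ :=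
  ![u 1 * v 2 - u 2 * v 1, u 2 * v 0 - u 0 * v 2, u 0 * v 1 - u 1 * v 0]

/-- let `X` be a nonsingular Beltrami field, `∇×X = f·X` with `f > 0`,
on a Riemannian 3-manifold with metric `g` and volume form `μ = m·dx∧dy∧dz`
(`m` nowhere zero); the curl is defined by `ι_{∇×X} μ = d(ι_X g)`, so the Beltrami
condition reads `curl (ι_X g) = m·f·X`.  Then the 1-form `α = ι_X g` is a contact
form: the coefficient of `α ∧ dα` equals `f·‖X‖²_g` times the (nonzero) coefficient
`m` of `μ`, and it is nowhere vanishing. -/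
theorem beltrami_gives_contact_form
    (g : (Fin 3 → ℝ) → Matrix (Fin 3) (Fin 3) ℝ) (hg : ∀ p, (g p).PosDef)
    (m : (Fin 3 → ℝ) → ℝ) (hm : ∀ p, m p ≠ 0)
    (X : (Fin 3 → ℝ) → Fin 3 → ℝ) (hX : ∀ p, X p ≠ 0)
    (f : (Fin 3 → ℝ) → ℝ) (hf : ∀ p, 0 < f p)
    (α : (Fin 3 → ℝ) → Fin 3 → ℝ)
    (hα : ∀ p i, α p i = ∑ j, g p i j * X p j)
    (beltrami : ∀ p i, curlV α p i = m p * (f p * X p i)) :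
    ∀ p, dot3 (α p) (curlV α p) = f p * m p * (∑ i, ∑ j, g p i j * X p i * X p j) ∧
      dot3 (α p) (curlV α p) ≠ 0 := by
  intro p
  have key : dot3 (α p) (curlV α p)
      = f p * m p * (∑ i, ∑ j, g p i j * X p i * X p j) := by
    unfold dot3
    rw [Finset.mul_sum]
    refine Finset.sum_congr rfl fun i _ => ?_
    rw [beltrami p i, hα p i, Finset.sum_mul, Finset.mul_sum]
    refine Finset.sum_congr rfl fun j _ => ?_
    ring
  have hpos : 0 < ∑ i, ∑ j, g p i j * X p i * X p j := by
    have := (hg p).dotProduct_mulVec_pos (hX p)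
    simp only [dotProduct, Matrix.mulVec, dotProduct, RCLike.re_to_real,
      star_trivial, Pi.star_apply] at this
    calc (0:ℝ) < ∑ i, X p i * ∑ j, g p i j * X p j := this
      _ = ∑ i, ∑ j, g p i j * X p i * X p j := by
          refine Finset.sum_congr rfl fun i _ => ?_
          rw [Finset.mul_sum]; exact Finset.sum_congr rfl fun j _ => by ring
  refine ⟨key, ?_⟩
  rw [key]
  exact mul_ne_zero (mul_ne_zero (hf p).ne' (hm p)) hpos.ne'
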